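/- arXiv:1904.09522 — 2 statements merged into one kernel-verified Lean document; each statement's English description precedes it below -/
import Mathlib

section
/- Let Δ be a topological group acting continuously on a compact topological group Π by group automorphisms, let G be a finite group with the discrete topology, and let ρ : Π → G be a continuous group homomorphism. Then there exists an open subgroup Δ₁ of Δ such that ρ(δ • g) = ρ(g) for every δ ∈ Δ₁ and every g ∈ Π. -/
/-- Let `Δ` be a topological group acting continuously on a compact topological
group `P` by group automorphisms, `G` a finite discrete group, and `ρ : P →* G` a continuous
homomorphism. Then there is an open subgroup `Δ₁` of `Δ` such that `ρ (δ • g) = ρ g` for every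
`δ ∈ Δ₁` and every `g : P`. -/
theorem stmt_2 {Δ P G : Type*} [Group Δ] [TopologicalSpace Δ] [IsTopologicalGroup Δ]
    [Group P] [TopologicalSpace P] [IsTopologicalGroup P] [CompactSpace P]
    [MulDistribMulAction Δ P] [ContinuousSMul Δ P]
    [Group G] [Finite G] [TopologicalSpace G] [DiscreteTopology G]
    (ρ : P →* G) (hρ : Continuous ρ) :
    ∃ Δ₁ : Subgroup Δ, IsOpen (Δ₁ : Set Δ) ∧
      ∀ δ ∈ Δ₁, ∀ g : P, ρ (δ • g) = ρ g := by
  set S : Subgroup Δ :=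
    { carrier := {δ | ∀ g : P, ρ (δ • g) = ρ g}
      one_mem' := by intro g; simp
      mul_mem' := by
        intro a b ha hb g
        rw [mul_smul, ha, hb]
      inv_mem' := by
        intro a ha g
        have := ha (a⁻¹ • g)
        rw [smul_inv_smul] at this; exact this.symm }
  refine ⟨S, ?_, fun δ hδ g => hδ g⟩
  apply Subgroup.isOpen_of_mem_nhds
  have h := (isCompact_univ : IsCompact (Set.univ : Set P)).eventually_forall_of_forall_eventually
    (x₀ := (1 : Δ)) (P := fun δ g => ρ (δ • g) = ρ g) ?_
  · filter_upwards [h] with δ hδ g using hδ g (Set.mem_univ g)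
  · intro g _
    have hc : Continuous fun p : Δ × P => ((ρ (p.1 • p.2), ρ p.2) : G × G) :=
      (hρ.comp continuous_smul).prodMk (hρ.comp continuous_snd)
    have hopen : IsOpen {p : Δ × P | ρ (p.1 • p.2) = ρ p.2} := by
      have := hc.isOpen_preimage {q : G × G | q.1 = q.2} (isOpen_discrete _)
      exact this
    have : {p : Δ × P | ρ (p.1 • p.2) = ρ p.2} ∈ nhds ((1 : Δ), g) :=
      hopen.mem_nhds (by simp)
    filter_upwards [this] with p hp using hp
end

section
/- Let G be a finite group, k a field, and d ≥ 1. Let G act on the free module k[G]^d diagonally by left translation. Then: (i) the space of G-invariant elements of k[G]^d is exactly (k·N_G)^d, where N_G = ∑_{g∈G} g ∈ k[G]; (ii) the group of k[G]-module automorphisms of k[G]^d acts transitively on the nonzero G-invariant elements. Consequently, for any two injective k[G]-module homomorphisms j₁, j₂ from the trivial one-dimensional module k into k[G]^d, there is a k[G]-module automorphism α of k[G]^d with α ∘ j₁ = j₂, and the quotient modules k[G]^d / j₁(k) and k[G]^d / j₂(k) are isomorphic as k[G]-modules. -/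
section Aux

variable (k : Type*) [Field k] (G : Type*) [Group G] [Fintype G]

/-- The norm element `N_G = ∑ g`. -/
noncomputable def normElt : MonoidAlgebra k G :=
  Finset.univ.sum fun g : G => MonoidAlgebra.of k G g

variable {k G}

lemma normElt_apply (h : G) : (normElt k G).coeff h = 1 := by
  classical
  rw [normElt, MonoidAlgebra.coeff_sum, Finset.sum_apply']
  simp [MonoidAlgebra.of_apply, MonoidAlgebra.coeff_single, Finsupp.single_apply]

lemma of_mul_normElt (g : G) : MonoidAlgebra.of k G g * normElt k G = normElt k G := by
  rw [normElt, Finset.mul_sum]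
  refine Fintype.sum_equiv (Equiv.mulLeft g) _ _ fun h => ?_
  rw [← map_mul]
  rfl

lemma invariant_iff (x : MonoidAlgebra k G) :
    (∀ g : G, MonoidAlgebra.of k G g * x = x) ↔ ∃ c : k, x = c • normElt k G := by
  constructor
  · intro h
    refine ⟨x.coeff 1, MonoidAlgebra.coeff_injective (Finsupp.ext fun h' => ?_)⟩
    have h2 := congrArg (fun y : MonoidAlgebra k G => y.coeff h') (h h')
    simp only [MonoidAlgebra.of_apply, MonoidAlgebra.coeff_single_mul_apply, one_mul,
      inv_mul_cancel] at h2
    rw [MonoidAlgebra.coeff_smul_apply, normElt_apply, smul_eq_mul, mul_one, ← h2]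
  · rintro ⟨c, rfl⟩ g
    rw [mul_smul_comm, of_mul_normElt]

/-- Any two nonzero vectors in a finite dimensional vector space are related by a
linear automorphism. -/
lemma exists_linearEquiv_apply_eq {K V : Type*} [Field K] [AddCommGroup V] [Module K V]
    [FiniteDimensional K V] {x y : V} (hx : x ≠ 0) (hy : y ≠ 0) :
    ∃ f : V ≃ₗ[K] V, f x = y := by
  obtain ⟨p, hp⟩ := Submodule.exists_isCompl (K ∙ x)
  obtain ⟨q, hq⟩ := Submodule.exists_isCompl (K ∙ y)
  have hfr : Module.finrank K p = Module.finrank K q := by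
    have h1 := Submodule.finrank_add_eq_of_isCompl hp
    have h2 := Submodule.finrank_add_eq_of_isCompl hq
    rw [finrank_span_singleton hx] at h1
    rw [finrank_span_singleton hy] at h2
    omega
  let e0 : (K ∙ x) ≃ₗ[K] (K ∙ y) :=
    (LinearEquiv.toSpanNonzeroSingleton K V x hx).symm ≪≫ₗ
      LinearEquiv.toSpanNonzeroSingleton K V y hy
  let epq : p ≃ₗ[K] q := LinearEquiv.ofFinrankEq _ _ hfr
  refine ⟨(Submodule.prodEquivOfIsCompl _ _ hp).symm ≪≫ₗ (e0.prodCongr epq) ≪≫ₗ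
      Submodule.prodEquivOfIsCompl _ _ hq, ?_⟩
  have hx' : (Submodule.prodEquivOfIsCompl (K ∙ x) p hp).symm x =
      ((⟨x, Submodule.mem_span_singleton_self x⟩ : ↥(K ∙ x)), (0 : ↥p)) :=
    (Submodule.prodEquivOfIsCompl (K ∙ x) p hp).symm_apply_eq.2 (by simp)
  have he0 : e0 ⟨x, Submodule.mem_span_singleton_self x⟩ =
      ⟨y, Submodule.mem_span_singleton_self y⟩ := by
    have h1 : (LinearEquiv.toSpanNonzeroSingleton K V x hx).symm
        ⟨x, Submodule.mem_span_singleton_self x⟩ = 1 := by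
      rw [LinearEquiv.symm_apply_eq, LinearEquiv.toSpanNonzeroSingleton_one]
    simp only [e0, LinearEquiv.trans_apply, h1, LinearEquiv.toSpanNonzeroSingleton_one]
  rw [LinearEquiv.trans_apply, LinearEquiv.trans_apply, hx', LinearEquiv.prodCongr_apply]
  simp only [he0, map_zero]
  rw [Submodule.coe_prodEquivOfIsCompl']
  simp

variable {A : Type*} [Ring A] [Algebra k A] {d : ℕ}

variable (A) in
/-- Multiplication by a `k`-matrix as an `A`-linear map on `A^d`. -/
noncomputable def matMulMap (M : Matrix (Fin d) (Fin d) k) : (Fin d → A) →ₗ[A] (Fin d → A) where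
  toFun x i := ∑ j, algebraMap k A (M i j) * x j
  map_add' x y := by
    funext i
    simp [mul_add, Finset.sum_add_distrib]
  map_smul' a x := by
    funext i
    simp only [Pi.smul_apply, smul_eq_mul, RingHom.id_apply, Finset.mul_sum]
    refine Finset.sum_congr rfl fun j _ => ?_
    rw [← mul_assoc, Algebra.commutes, mul_assoc]

lemma matMulMap_apply (M : Matrix (Fin d) (Fin d) k) (x : Fin d → A) (i : Fin d) :
    matMulMap A M x i = ∑ j, algebraMap k A (M i j) * x j := rfl

lemma matMulMap_matMulMap (M N : Matrix (Fin d) (Fin d) k) (x : Fin d → A) :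
    matMulMap A M (matMulMap A N x) = matMulMap A (M * N) x := by
  funext i
  simp only [matMulMap_apply, Finset.mul_sum]
  rw [Finset.sum_comm]
  refine Finset.sum_congr rfl fun l _ => ?_
  rw [Matrix.mul_apply, map_sum, Finset.sum_mul]
  refine Finset.sum_congr rfl fun j _ => ?_
  rw [map_mul, mul_assoc]

lemma matMulMap_one (x : Fin d → A) :
    matMulMap A (1 : Matrix (Fin d) (Fin d) k) x = x := by
  funext i
  simp [matMulMap_apply, Matrix.one_apply, apply_ite (algebraMap k A), ite_mul]

variable (A) in
/-- Base change of a linear automorphism of `k^d` to an `A`-linear automorphism of `A^d`. -/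
noncomputable def liftEquiv (f : (Fin d → k) ≃ₗ[k] (Fin d → k)) :
    (Fin d → A) ≃ₗ[A] (Fin d → A) :=
  LinearEquiv.ofLinear
    (matMulMap A (LinearMap.toMatrix' (f : (Fin d → k) →ₗ[k] (Fin d → k))))
    (matMulMap A (LinearMap.toMatrix' (f.symm : (Fin d → k) →ₗ[k] (Fin d → k))))
    (by
      ext x
      simp only [LinearMap.comp_apply, LinearMap.id_apply]
      rw [matMulMap_matMulMap, ← LinearMap.toMatrix'_comp]
      have : (f : (Fin d → k) →ₗ[k] (Fin d → k)) ∘ₗ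
          (f.symm : (Fin d → k) →ₗ[k] (Fin d → k)) = LinearMap.id := by
        ext z; simp
      rw [this, LinearMap.toMatrix'_id, matMulMap_one])
    (by
      ext x
      simp only [LinearMap.comp_apply, LinearMap.id_apply]
      rw [matMulMap_matMulMap, ← LinearMap.toMatrix'_comp]
      have : (f.symm : (Fin d → k) →ₗ[k] (Fin d → k)) ∘ₗ
          (f : (Fin d → k) →ₗ[k] (Fin d → k)) = LinearMap.id := by
        ext z; simp
      rw [this, LinearMap.toMatrix'_id, matMulMap_one])

lemma liftEquiv_apply_smul (f : (Fin d → k) ≃ₗ[k] (Fin d → k)) (c : Fin d → k) (z : A) :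
    liftEquiv A f (fun i => c i • z) = fun i => f c i • z := by
  funext i
  show ∑ j, algebraMap k A (LinearMap.toMatrix'
      (f : (Fin d → k) →ₗ[k] (Fin d → k)) i j) * (c j • z) = f c i • z
  have key : ∀ a b : k, algebraMap k A a * (b • z) = (a * b) • z := by
    intro a b
    rw [← Algebra.smul_def, smul_smul]
  simp_rw [key]
  rw [← Finset.sum_smul]
  congr 1
  have h2 : Matrix.toLin' (LinearMap.toMatrix'
      (f : (Fin d → k) →ₗ[k] (Fin d → k))) c = f c := by
    rw [Matrix.toLin'_toMatrix']
    rfl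
  calc ∑ j, LinearMap.toMatrix' (f : (Fin d → k) →ₗ[k] (Fin d → k)) i j * c j
      = Matrix.toLin' (LinearMap.toMatrix' (f : (Fin d → k) →ₗ[k] (Fin d → k))) c i := by
        rw [Matrix.toLin'_apply]; rfl
    _ = f c i := by rw [h2]

end Aux

/-- Let `G` be a finite group, `k` a field, `d ≥ 1`, and let `G` act diagonally by
left translation on `k[G]^d`.  Then (i) the `G`-invariants of `k[G]^d` are exactly `(k·N_G)^d`
where `N_G = ∑_{g∈G} g`; (ii) the `k[G]`-module automorphisms of `k[G]^d` act transitively on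
the nonzero invariant elements; consequently, for any two injective `k[G]`-homomorphisms
`j₁, j₂` from the trivial one-dimensional module `k` into `k[G]^d` (i.e. injective `k`-linear
maps with invariant image), there is an automorphism `α` with `α ∘ j₁ = j₂`, and the quotients
`k[G]^d / j₁(k)` and `k[G]^d / j₂(k)` are isomorphic as `k[G]`-modules. -/
theorem stmt_8 (k : Type*) [Field k] (G : Type*) [Group G] [Fintype G] (d : ℕ) (hd : 1 ≤ d) :
    (∀ v : Fin d → MonoidAlgebra k G,
      (∀ g : G, (fun i => MonoidAlgebra.of k G g * v i) = v) ↔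
        ∃ c : Fin d → k,
          v = fun i => c i • (Finset.univ.sum fun g : G => MonoidAlgebra.of k G g)) ∧
    (∀ v w : Fin d → MonoidAlgebra k G,
      (∀ g : G, (fun i => MonoidAlgebra.of k G g * v i) = v) →
      (∀ g : G, (fun i => MonoidAlgebra.of k G g * w i) = w) →
      v ≠ 0 → w ≠ 0 →
      ∃ α : (Fin d → MonoidAlgebra k G) ≃ₗ[MonoidAlgebra k G] (Fin d → MonoidAlgebra k G),
        α v = w) ∧
    (∀ j₁ j₂ : k →ₗ[k] (Fin d → MonoidAlgebra k G),
      Function.Injective j₁ → Function.Injective j₂ →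
      (∀ (c : k) (g : G), (fun i => MonoidAlgebra.of k G g * j₁ c i) = j₁ c) →
      (∀ (c : k) (g : G), (fun i => MonoidAlgebra.of k G g * j₂ c i) = j₂ c) →
      ∃ α : (Fin d → MonoidAlgebra k G) ≃ₗ[MonoidAlgebra k G] (Fin d → MonoidAlgebra k G),
        (∀ c : k, α (j₁ c) = j₂ c) ∧
        Nonempty
          (((Fin d → MonoidAlgebra k G) ⧸
              Submodule.span (MonoidAlgebra k G) (Set.range j₁)) ≃ₗ[MonoidAlgebra k G]
            ((Fin d → MonoidAlgebra k G) ⧸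
              Submodule.span (MonoidAlgebra k G) (Set.range j₂)))) := by
  have part1 : ∀ v : Fin d → MonoidAlgebra k G,
      (∀ g : G, (fun i => MonoidAlgebra.of k G g * v i) = v) ↔
        ∃ c : Fin d → k, v = fun i => c i • normElt k G := by
    intro v
    constructor
    · intro h
      choose c hc using fun i => (invariant_iff (v i)).mp (fun g => congrFun (h g) i)
      exact ⟨c, funext hc⟩
    · rintro ⟨c, rfl⟩ g
      funext i
      exact (invariant_iff _).mpr ⟨c i, rfl⟩ g
  have part2 : ∀ v w : Fin d → MonoidAlgebra k G,
      (∀ g : G, (fun i => MonoidAlgebra.of k G g * v i) = v) →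
      (∀ g : G, (fun i => MonoidAlgebra.of k G g * w i) = w) →
      v ≠ 0 → w ≠ 0 →
      ∃ α : (Fin d → MonoidAlgebra k G) ≃ₗ[MonoidAlgebra k G] (Fin d → MonoidAlgebra k G),
        α v = w := by
    intro v w hv hw hv0 hw0
    obtain ⟨c, rfl⟩ := (part1 v).mp hv
    obtain ⟨c', rfl⟩ := (part1 w).mp hw
    have hc : c ≠ 0 := by
      rintro rfl
      exact hv0 (funext fun i => by simp)
    have hc' : c' ≠ 0 := by
      rintro rfl
      exact hw0 (funext fun i => by simp)
    obtain ⟨f, hf⟩ := exists_linearEquiv_apply_eq (K := k) hc hc'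
    refine ⟨liftEquiv (MonoidAlgebra k G) f, ?_⟩
    rw [liftEquiv_apply_smul, hf]
  refine ⟨part1, part2, ?_⟩
  intro j₁ j₂ h1 h2 hi1 hi2
  have hv0 : j₁ 1 ≠ 0 := fun h =>
    one_ne_zero (h1 (h.trans (map_zero j₁).symm))
  have hw0 : j₂ 1 ≠ 0 := fun h =>
    one_ne_zero (h2 (h.trans (map_zero j₂).symm))
  obtain ⟨α, hα⟩ := part2 (j₁ 1) (j₂ 1) (hi1 1) (hi2 1) hv0 hw0
  have hcomp : ∀ c : k, α (j₁ c) = j₂ c := by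
    intro c
    have e1 : j₁ c = c • j₁ 1 := by rw [← map_smul, smul_eq_mul, mul_one]
    have e2 : j₂ c = c • j₂ 1 := by rw [← map_smul, smul_eq_mul, mul_one]
    rw [e1, e2, ← hα]
    exact α.toLinearMap.map_smul_of_tower c (j₁ 1)
  have hrange : (α : (Fin d → MonoidAlgebra k G) → (Fin d → MonoidAlgebra k G)) ''
      Set.range j₁ = Set.range j₂ := by
    rw [← Set.range_comp]
    have hfun : (α : (Fin d → MonoidAlgebra k G) → (Fin d → MonoidAlgebra k G)) ∘ ⇑j₁ = ⇑j₂ :=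
      funext hcomp
    rw [hfun]
  refine ⟨α, hcomp, ⟨Submodule.Quotient.equiv _ _ α ?_⟩⟩
  rw [Submodule.map_span]
  exact congrArg _ hrange
end
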